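/- Suppose on an open set U ⊆ ℝⁿ \ {0} the maps θ ↦ a*(θ), θ ↦ ω*(θ) and θ ↦ Δ_θ := ∇²g(a*(θ)) are differentiable, where for each θ ∈ U: g(a*(θ)) = 0, ∇g(a*(θ)) = ω*(θ)·θ with ω*(θ) > 0, and Δ_θ is positive definite (hence invertible). Then the Jacobian of a* satisfies ∇a*(θ) = ω*(θ)·( Δ_θ⁻¹ − Δ_θ⁻¹ θ θᵀ Δ_θ⁻¹ / (θᵀ Δ_θ⁻¹ θ) ) for every θ ∈ U. -/

import Mathlib

open RealInnerProductSpace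

/-- closed form for the Jacobian of the reward-maximizing action map.
On an open set `U ⊆ ℝⁿ \ {0}` on which `a*`, `ω*` and `Δ_θ = ∇²g(a*(θ))` are differentiable,
with `g(a*(θ)) = 0`, `∇g(a*(θ)) = ω*(θ)θ`, `ω*(θ) > 0` and `Δ_θ` positive definite with
(two-sided) inverse `Hinv θ`, the Jacobian satisfies, for every direction `v`,
`∇a*(θ) v = ω*(θ)·(Δ_θ⁻¹ v − (θᵀΔ_θ⁻¹θ)⁻¹ · (θᵀΔ_θ⁻¹v) · Δ_θ⁻¹θ)`. -/
theorem fderiv_astar_closed_form {n : ℕ}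
    (g : EuclideanSpace ℝ (Fin n) → ℝ) (hg : ContDiff ℝ 3 g)
    (κ : ℝ) (hκ : 0 < κ) (hsc : StrongConvexOn Set.univ κ g)
    (hcompact : IsCompact {x : EuclideanSpace ℝ (Fin n) | g x ≤ 0})
    (U : Set (EuclideanSpace ℝ (Fin n))) (hU : IsOpen U) (hU0 : (0 : EuclideanSpace ℝ (Fin n)) ∉ U)
    (astar : EuclideanSpace ℝ (Fin n) → EuclideanSpace ℝ (Fin n))
    (ωstar : EuclideanSpace ℝ (Fin n) → ℝ)
    (hmem : ∀ θ ∈ U, g (astar θ) ≤ 0)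
    (hmax : ∀ θ ∈ U, ∀ b, g b ≤ 0 → ⟪θ, b⟫ ≤ ⟪θ, astar θ⟫)
    (hbdry : ∀ θ ∈ U, g (astar θ) = 0)
    (hωpos : ∀ θ ∈ U, 0 < ωstar θ)
    (hgrad : ∀ θ ∈ U, gradient g (astar θ) = ωstar θ • θ)
    (H : EuclideanSpace ℝ (Fin n) → (EuclideanSpace ℝ (Fin n) →L[ℝ] EuclideanSpace ℝ (Fin n)))
    (hH : ∀ θ ∈ U, H θ = fderiv ℝ (gradient g) (astar θ))
    (hdiffa : DifferentiableOn ℝ astar U)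
    (hdiffω : DifferentiableOn ℝ ωstar U)
    (hdiffH : DifferentiableOn ℝ H U)
    (hpos : ∀ θ ∈ U, ∀ v : EuclideanSpace ℝ (Fin n), v ≠ 0 → 0 < ⟪H θ v, v⟫)
    (Hinv : EuclideanSpace ℝ (Fin n) → (EuclideanSpace ℝ (Fin n) →L[ℝ] EuclideanSpace ℝ (Fin n)))
    (hHinv : ∀ θ ∈ U, ∀ v, H θ (Hinv θ v) = v ∧ Hinv θ (H θ v) = v)
    (θ : EuclideanSpace ℝ (Fin n)) (hθU : θ ∈ U) :
    ∀ v : EuclideanSpace ℝ (Fin n),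
      fderiv ℝ astar θ v =
        ωstar θ • (Hinv θ v - (⟪θ, Hinv θ θ⟫)⁻¹ • (⟪θ, Hinv θ v⟫ • Hinv θ θ)) := by
  intro v
  have hθ0 : θ ≠ 0 := fun h => hU0 (h ▸ hθU)
  have hnhds : U ∈ nhds θ := hU.mem_nhds hθU
  have hA : DifferentiableAt ℝ astar θ := (hdiffa θ hθU).differentiableAt hnhds
  have hΩ : DifferentiableAt ℝ ωstar θ := (hdiffω θ hθU).differentiableAt hnhds
  have hgdiff : Differentiable ℝ g := hg.differentiable (by norm_num)
  have hgradCD : ContDiff ℝ 2 (gradient g) := by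
    have h1 : ContDiff ℝ 2 (fderiv ℝ g) := hg.fderiv_right (by norm_num)
    exact (InnerProductSpace.toDual ℝ _).symm.contDiff.comp h1
  have hgradD : DifferentiableAt ℝ (gradient g) (astar θ) :=
    (hgradCD.differentiable (by norm_num)).differentiableAt
  set Da := fderiv ℝ astar θ with hDa
  set Dω := fderiv ℝ ωstar θ with hDω
  set ω := ωstar θ with hω
  have hωne : ω ≠ 0 := ne_of_gt (hωpos θ hθU)
  -- Step A : ⟪θ, Da v⟫ = 0
  have hconst : (fun θ' => g (astar θ')) =ᶠ[nhds θ] fun _ => (0:ℝ) :=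
    Filter.eventuallyEq_of_mem hnhds fun x hx => hbdry x hx
  have hstepA : ⟪θ, Da v⟫ = 0 := by
    have h0 : fderiv ℝ (fun θ' => g (astar θ')) θ = 0 := by
      rw [hconst.fderiv_eq]; exact fderiv_const_apply 0
    have hc : fderiv ℝ (g ∘ astar) θ = (fderiv ℝ g (astar θ)).comp Da :=
      fderiv_comp θ (hgdiff (astar θ)) hA
    have hz : (fderiv ℝ g (astar θ)) (Da v) = 0 := by
      have h := congrArg (fun L => L v) (hc.symm.trans h0)
      simpa using h
    have hgr : ⟪gradient g (astar θ), Da v⟫ = 0 := by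
      rw [gradient, InnerProductSpace.toDual_symm_apply]; exact hz
    rw [hgrad θ hθU, real_inner_smul_left] at hgr
    exact (mul_eq_zero.mp hgr).resolve_left hωne
  -- Step B : H θ (Da v) = Dω v • θ + ω • v
  have heq2 : (fun θ' => gradient g (astar θ')) =ᶠ[nhds θ] fun θ' => ωstar θ' • θ' :=
    Filter.eventuallyEq_of_mem hnhds fun x hx => hgrad x hx
  have hkey : H θ (Da v) = Dω v • θ + ω • v := by
    have hc : fderiv ℝ (gradient g ∘ astar) θ = (fderiv ℝ (gradient g) (astar θ)).comp Da :=
      fderiv_comp θ hgradD hA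
    have hR : HasFDerivAt (fun θ' => ωstar θ' • θ')
        (ω • ContinuousLinearMap.id ℝ _ + Dω.smulRight θ) θ :=
      hΩ.hasFDerivAt.smul (hasFDerivAt_id θ)
    have hfe : fderiv ℝ (fun θ' => gradient g (astar θ')) θ =
        ω • ContinuousLinearMap.id ℝ _ + Dω.smulRight θ := by
      rw [heq2.fderiv_eq]; exact hR.fderiv
    have h := congrArg (fun L => L v) ((hc.symm.trans hfe))
    simp only [ContinuousLinearMap.comp_apply, ContinuousLinearMap.add_apply,
      ContinuousLinearMap.smul_apply, ContinuousLinearMap.id_apply,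
      ContinuousLinearMap.smulRight_apply] at h
    rw [hH θ hθU, h, add_comm]
  have hDav : Da v = Dω v • Hinv θ θ + ω • Hinv θ v := by
    have h1 := (hHinv θ hθU (Da v)).2
    rw [hkey] at h1
    rw [← h1, map_add, map_smul, map_smul]
  -- positivity of c
  have hHinvθ0 : Hinv θ θ ≠ 0 := by
    intro h
    have h2 := (hHinv θ hθU θ).1
    rw [h, map_zero] at h2
    exact hθ0 h2.symm
  have hcpos : 0 < ⟪θ, Hinv θ θ⟫ := by
    have h3 := hpos θ hθU (Hinv θ θ) hHinvθ0
    rwa [(hHinv θ hθU θ).1] at h3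
  have hcne : ⟪θ, Hinv θ θ⟫ ≠ 0 := ne_of_gt hcpos
  set c := (⟪θ, Hinv θ θ⟫ : ℝ) with hcdef
  set b := (⟪θ, Hinv θ v⟫ : ℝ) with hbdef
  have heqn : Dω v * c + ω * b = 0 := by
    rw [hDav, inner_add_right, real_inner_smul_right, real_inner_smul_right] at hstepA
    exact hstepA
  have hDωv : Dω v = -(ω * b) / c := by
    rw [eq_div_iff hcne]
    linarith
  rw [hDav, hDωv]
  match_scalars <;> field_simp <;> ring
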